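/- arXiv:1411.1620 — 3 statements merged into one kernel-verified Lean document; each statement's English description precedes it below -/
import Mathlib

section
/- There exists a function f : 𝕋^∞ → ℝ that is 1-Lipschitz with respect to the Euclidean metric dist₂ such that for every parallel infinite-dimensional subtorus M ⊆ 𝕋^∞ and every real number R, there exists a point x ∈ M with f(x) > R. (In particular, no value a ∈ ℝ can satisfy the conclusion of the spectrum theorem for f, so the measurability hypothesis in the main theorem is essential.) -/
noncomputable section
open MeasureTheory ENNReal Filter
open scoped Classical

/-- The infinite-dimensional torus `𝕋^∞ = (ℝ/ℤ)^ℕ`. -/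
abbrev InfTorus : Type := ℕ → AddCircle (1 : ℝ)

/-- The metric `dist_p` on the infinite torus, valued in `[0,∞]`:
`dist_p(x,y) = (∑ᵢ dist(xᵢ,yᵢ)^p)^(1/p)`. -/
def distP (p : ℝ) (x y : InfTorus) : ℝ≥0∞ := (∑' i, edist (x i) (y i) ^ p) ^ (1 / p)

lemma distP2_self (x : InfTorus) : distP 2 x x = 0 := by
  simp [distP, ENNReal.rpow_eq_zero_iff]

lemma distP2_comm (x y : InfTorus) : distP 2 x y = distP 2 y x := by
  simp [distP, edist_comm]

lemma distP2_triangle (x y z : InfTorus) :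
    distP 2 x z ≤ distP 2 x y + distP 2 y z := by
  set D : ℝ≥0∞ := distP 2 x y + distP 2 y z with hD
  have key : ∀ s : Finset ℕ, (∑ i ∈ s, edist (x i) (z i) ^ (2:ℝ)) ≤ D ^ (2:ℝ) := by
    intro s
    have h1 : (∑ i ∈ s, edist (x i) (z i) ^ (2:ℝ)) ^ (1/(2:ℝ)) ≤
        (∑ i ∈ s, (edist (x i) (y i) + edist (y i) (z i)) ^ (2:ℝ)) ^ (1/(2:ℝ)) := by
      apply ENNReal.rpow_le_rpow _ (by norm_num)
      apply Finset.sum_le_sum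
      intro i _
      exact ENNReal.rpow_le_rpow (edist_triangle _ _ _) (by norm_num)
    have h2 := ENNReal.Lp_add_le s (fun i => edist (x i) (y i))
      (fun i => edist (y i) (z i)) (by norm_num : (1:ℝ) ≤ 2)
    have h3 : (∑ i ∈ s, edist (x i) (y i) ^ (2:ℝ)) ^ (1/(2:ℝ)) ≤ distP 2 x y := by
      apply ENNReal.rpow_le_rpow _ (by norm_num)
      exact ENNReal.sum_le_tsum s
    have h4 : (∑ i ∈ s, edist (y i) (z i) ^ (2:ℝ)) ^ (1/(2:ℝ)) ≤ distP 2 y z := by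
      apply ENNReal.rpow_le_rpow _ (by norm_num)
      exact ENNReal.sum_le_tsum s
    have h5 : (∑ i ∈ s, edist (x i) (z i) ^ (2:ℝ)) ^ (1/(2:ℝ)) ≤ D :=
      le_trans (le_trans h1 h2) (add_le_add h3 h4)
    calc (∑ i ∈ s, edist (x i) (z i) ^ (2:ℝ))
        = ((∑ i ∈ s, edist (x i) (z i) ^ (2:ℝ)) ^ (1/(2:ℝ))) ^ (2:ℝ) := by
          rw [← ENNReal.rpow_mul]; norm_num
      _ ≤ D ^ (2:ℝ) := ENNReal.rpow_le_rpow h5 (by norm_num)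
  have hsum : (∑' i, edist (x i) (z i) ^ (2:ℝ)) ≤ D ^ (2:ℝ) := by
    rw [ENNReal.tsum_eq_iSup_sum]; exact iSup_le key
  calc distP 2 x z = (∑' i, edist (x i) (z i) ^ (2:ℝ)) ^ (1/(2:ℝ)) := rfl
    _ ≤ (D ^ (2:ℝ)) ^ (1/(2:ℝ)) := ENNReal.rpow_le_rpow hsum (by norm_num)
    _ = D := by rw [← ENNReal.rpow_mul]; norm_num

/-- The setoid of finite `dist₂`-distance. -/
def finDistSetoid : Setoid InfTorus :=
  ⟨fun x y => distP 2 x y ≠ ∞,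
   ⟨fun x => by simp [distP2_self],
    fun {x y} h => by rwa [distP2_comm],
    fun {x y z} hxy hyz => by
      intro h
      have := distP2_triangle x y z
      rw [h] at this
      exact (ENNReal.add_lt_top.2 ⟨hxy.lt_top, hyz.lt_top⟩).ne (top_le_iff.mp this)⟩⟩

/-- Representative of the connectivity class of `x`. -/
def classRep (x : InfTorus) : InfTorus :=
  (Quotient.mk finDistSetoid x).out

lemma classRep_spec (x : InfTorus) : distP 2 x (classRep x) ≠ ∞ := by
  have h : distP 2 (classRep x) x ≠ ∞ :=
    Quotient.exact (Quotient.out_eq (Quotient.mk finDistSetoid x))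
  rwa [distP2_comm] at h

lemma classRep_eq_of_rel {x y : InfTorus} (h : distP 2 x y ≠ ∞) :
    classRep x = classRep y := by
  unfold classRep
  congr 1
  exact Quotient.sound (s := finDistSetoid) h

/-- There is a (non-measurable) function `f : 𝕋^∞ → ℝ` which is `1`-Lipschitz
w.r.t. the Euclidean metric `dist₂` (the condition being vacuous at infinite distance), yet is
unbounded above on every parallel infinite-dimensional subtorus. Hence the measurability
hypothesis in the main theorem is essential. -/
theorem exists_lipschitz_unbounded_on_every_subtorus :
    ∃ f : InfTorus → ℝ,
      (∀ x y : InfTorus, distP 2 x y ≠ ∞ → |f x - f y| ≤ (distP 2 x y).toReal) ∧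
      ∀ (A : Set ℕ), A.Infinite → ∀ (b : InfTorus) (R : ℝ),
        ∃ x : InfTorus, (∀ i ∉ A, x i = b i) ∧ R < f x := by
  refine ⟨fun x => (distP 2 x (classRep x)).toReal, ?_, ?_⟩
  · -- Lipschitz part
    intro x y hxy
    have hrep : classRep x = classRep y := classRep_eq_of_rel hxy
    simp only
    rw [← hrep]
    set r := classRep x with hr
    have hxr : distP 2 x r ≠ ∞ := classRep_spec x
    have hyr : distP 2 y r ≠ ∞ := by rw [hrep]; exact classRep_spec y
    have t1 : distP 2 x r ≤ distP 2 x y + distP 2 y r := distP2_triangle x y r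
    have t2 : distP 2 y r ≤ distP 2 x y + distP 2 x r := by
      rw [distP2_comm x y]; exact distP2_triangle y x r
    rw [abs_sub_le_iff]
    constructor
    · have := ENNReal.toReal_mono (by
        exact ENNReal.add_ne_top.2 ⟨hxy, hyr⟩) t1
      rw [ENNReal.toReal_add hxy hyr] at this
      linarith
    · have := ENNReal.toReal_mono (by
        exact ENNReal.add_ne_top.2 ⟨hxy, hxr⟩) t2
      rw [ENNReal.toReal_add hxy hxr] at this
      linarith
  · -- unboundedness part
    intro A hA b R
    -- base point of the subtorus
    set y : InfTorus := fun i => if i ∈ A then 0 else b i with hy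
    set r := classRep y with hr
    have hyr : distP 2 y r ≠ ∞ := classRep_spec y
    -- choose n with √(n/4) > R
    obtain ⟨n, hn⟩ : ∃ n : ℕ, 4 * R ^ 2 < (n : ℝ) ∧ 0 < n := by
      obtain ⟨n, hn⟩ := exists_nat_gt (max (4 * R ^ 2) 0)
      exact ⟨n, lt_of_le_of_lt (le_max_left _ _) hn, by
        exact_mod_cast lt_of_le_of_lt (le_max_right _ _) hn⟩
    obtain ⟨s, hsA, hscard⟩ := hA.exists_subset_card_eq n
    -- perturbed point
    set x : InfTorus := fun i => if i ∈ s then r i + ((1/2 : ℝ) : AddCircle (1:ℝ)) else y i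
      with hx
    have hxy_coords : ∀ i, i ∉ (s : Set ℕ) → x i = y i := by
      intro i hi
      simp only [hx, if_neg (by simpa using hi)]
    -- x agrees with b off A
    have hxb : ∀ i ∉ A, x i = b i := by
      intro i hi
      have his : i ∉ (s : Set ℕ) := fun h => hi (hsA h)
      rw [hxy_coords i his, hy]
      simp [if_neg hi]
    -- distP 2 x y is finite: finitely many nonzero terms
    have hterm0 : ∀ i ∉ s, edist (x i) (y i) ^ (2:ℝ) = 0 := by
      intro i hi
      rw [hxy_coords i (by simpa using hi)]
      simp [ENNReal.rpow_eq_zero_iff]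
    have hfin : distP 2 x y ≠ ∞ := by
      unfold distP
      rw [tsum_eq_sum hterm0]
      apply ENNReal.rpow_ne_top_of_nonneg (by norm_num)
      apply (ENNReal.sum_lt_top.2 ?_).ne
      intro i _
      exact (ENNReal.rpow_lt_top_of_nonneg (by norm_num) (edist_ne_top _ _))
    have hrepx : classRep x = r := by rw [hr]; exact classRep_eq_of_rel hfin
    have hxr : distP 2 x r ≠ ∞ := by
      have := classRep_spec x; rwa [hrepx] at this
    -- each perturbed coordinate is at distance exactly 1/2 from r i
    have hhalf : ∀ i ∈ s, edist (x i) (r i) = ENNReal.ofReal (1/2) := by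
      intro i hi
      have hxi : x i = r i + ((1/2 : ℝ) : AddCircle (1:ℝ)) := by simp [hx, if_pos hi]
      rw [hxi, edist_dist]
      congr 1
      have : dist (r i + ((1/2 : ℝ) : AddCircle (1:ℝ))) (r i) =
          ‖((1/2 : ℝ) : AddCircle (1:ℝ))‖ := by
        rw [dist_eq_norm]; simp
      rw [this, AddCircle.norm_eq]
      norm_num [round_eq]
    -- lower bound for distP 2 x r
    have hn4 : (0:ℝ) < (n : ℝ) / 4 := div_pos (by exact_mod_cast hn.2) (by norm_num)
    have hlow : ENNReal.ofReal (Real.sqrt ((n : ℝ) / 4)) ≤ distP 2 x r := by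
      have hsum_ge : ENNReal.ofReal ((n : ℝ) / 4) ≤ ∑' i, edist (x i) (r i) ^ (2:ℝ) := by
        calc ENNReal.ofReal ((n : ℝ) / 4)
            = ∑ i ∈ s, ENNReal.ofReal (1/4) := by
              rw [Finset.sum_const, hscard, nsmul_eq_mul]
              rw [← ENNReal.ofReal_natCast, ← ENNReal.ofReal_mul (by positivity)]
              congr 1; ring
          _ = ∑ i ∈ s, edist (x i) (r i) ^ (2:ℝ) := by
              apply Finset.sum_congr rfl
              intro i hi
              rw [hhalf i hi, ENNReal.ofReal_rpow_of_pos (by norm_num)]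
              congr 1
              rw [show (2:ℝ) = ((2:ℕ):ℝ) by norm_num, Real.rpow_natCast]
              norm_num
          _ ≤ ∑' i, edist (x i) (r i) ^ (2:ℝ) := ENNReal.sum_le_tsum s
      calc ENNReal.ofReal (Real.sqrt ((n : ℝ) / 4))
          = (ENNReal.ofReal ((n : ℝ) / 4)) ^ (1/(2:ℝ)) := by
            rw [ENNReal.ofReal_rpow_of_pos hn4]
            rw [Real.sqrt_eq_rpow]
        _ ≤ distP 2 x r := ENNReal.rpow_le_rpow hsum_ge (by norm_num)
    refine ⟨x, hxb, ?_⟩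
    have hR : R < Real.sqrt ((n : ℝ) / 4) := by
      rcases le_or_gt R 0 with hR0 | hR0
      · exact lt_of_le_of_lt hR0 (Real.sqrt_pos.2 hn4)
      · rw [show R = Real.sqrt (R ^ 2) by rw [Real.sqrt_sq hR0.le]]
        apply Real.sqrt_lt_sqrt (by positivity)
        linarith [hn.1]
    have : Real.sqrt ((n : ℝ) / 4) ≤ (distP 2 x r).toReal :=
      (ENNReal.ofReal_le_iff_le_toReal hxr).mp hlow
    calc R < Real.sqrt ((n : ℝ) / 4) := hR
      _ ≤ (distP 2 x r).toReal := this
      _ = (distP 2 x (classRep x)).toReal := by rw [hrepx]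
end
end

section
/- Let B ⊆ ℝ be a Borel set such that both B and ℝ∖B intersect every non-empty open interval in a set of positive Lebesgue measure, and let A = { x ∈ 𝕋^∞ : ∑_{i=1}^∞ cos(2πxᵢ)/i² ∈ B }. Then the indicator function f = 1_A is measurable and has empty spectrum: for every a ∈ ℝ there exists ε > 0 such that no parallel infinite-dimensional subtorus M ⊆ 𝕋^∞ satisfies ess sup_M |f − a| < ε. -/
noncomputable section
open MeasureTheory ENNReal Filter
open scoped Classical
open scoped NNReal

/-- The product of the uniform probability measures on the circles `ℝ/ℤ`, realized as the
normalized Haar measure on the compact group `𝕋^∞` (by uniqueness of the translation-invariant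
Borel probability measure, they coincide). -/
def torusMeasure : Measure InfTorus :=
  Measure.addHaarMeasure (⊤ : TopologicalSpace.PositiveCompacts InfTorus)

/-- The map fixing all coordinates outside `A` to the values of `b`. -/
def subtorusProj (A : Set ℕ) (b : InfTorus) (x : InfTorus) : InfTorus :=
  fun i => if i ∈ A then x i else b i

/-- The uniform probability measure on the parallel subtorus
`M = {x | ∀ i ∉ A, x i = b i}`: the pushforward of the product measure under the projection
onto `M`, i.e. the product of uniform measures over the coordinates in `A`, the remaining
coordinates being fixed to the values of `b`. -/
def subtorusMeasure (A : Set ℕ) (b : InfTorus) : Measure InfTorus :=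
  torusMeasure.map (subtorusProj A b)

/-- `cos(2πz)` for `z ∈ ℝ/ℤ`: the real part of the canonical character
`z ↦ exp(2πiz)` of `ℝ/ℤ`. -/
def cosC (z : AddCircle (1 : ℝ)) : ℝ := ((AddCircle.toCircle z : ℂ)).re

/-- The indicator function of `{x ∈ 𝕋^∞ : ∑_{i≥1} cos(2πxᵢ)/i² ∈ B}` (with Lean's `0`-indexed
coordinate `i` corresponding to the paper's coordinate `i+1`). -/
def specFun (B : Set ℝ) : InfTorus → ℝ :=
  ({x : InfTorus | (∑' i : ℕ, cosC (x i) / ((i : ℝ) + 1) ^ 2) ∈ B}).indicator fun _ => 1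

instance : Fact ((0:ℝ) < 1) := ⟨one_pos⟩

lemma cosC_coe (u : ℝ) : cosC (u : AddCircle (1:ℝ)) = Real.cos (2 * Real.pi * u) := by
  rw [cosC, AddCircle.toCircle_apply_mk, Circle.coe_exp, Complex.exp_ofReal_mul_I_re]
  norm_num

lemma abs_cosC_le (z : AddCircle (1:ℝ)) : |cosC z| ≤ 1 := by
  rw [cosC]
  calc |(AddCircle.toCircle z : ℂ).re| ≤ ‖(AddCircle.toCircle z : ℂ)‖ :=
        Complex.abs_re_le_norm _
    _ = 1 := Circle.norm_coe _

lemma continuous_cosC : Continuous cosC :=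
  Complex.continuous_re.comp (continuous_subtype_val.comp AddCircle.continuous_toCircle)

lemma summable_w : Summable (fun i : ℕ => 1 / ((i:ℝ)+1)^2) := by
  have h : Summable (fun n : ℕ => 1 / (n:ℝ) ^ 2) := Real.summable_one_div_nat_pow.mpr one_lt_two
  have h2 := (summable_nat_add_iff (f := fun n : ℕ => 1 / (n:ℝ) ^ 2) 1).mpr h
  refine h2.congr fun i => ?_
  push_cast
  ring

def torusSum (x : InfTorus) : ℝ := ∑' i : ℕ, cosC (x i) / ((i : ℝ) + 1) ^ 2

lemma specFun_eq (B : Set ℝ) :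
    specFun B = ({x : InfTorus | torusSum x ∈ B}).indicator (fun _ => 1) := rfl

lemma torusSum_bound (y : InfTorus) (i : ℕ) :
    ‖cosC (y i) / ((i:ℝ)+1)^2‖ ≤ 1 / ((i:ℝ)+1)^2 := by
  rw [Real.norm_eq_abs, abs_div, abs_of_pos (by positivity : (0:ℝ) < ((i:ℝ)+1)^2)]
  gcongr
  exact abs_cosC_le _

lemma torusSum_summable (y : InfTorus) :
    Summable (fun i : ℕ => cosC (y i) / ((i:ℝ)+1)^2) :=
  Summable.of_norm_bounded summable_w (torusSum_bound y)

lemma continuous_torusSum : Continuous torusSum := by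
  refine continuous_tsum (fun i => ?_) summable_w (fun i y => torusSum_bound y i)
  exact (continuous_cosC.comp (continuous_apply i)).div_const _

lemma lipschitz_cos : LipschitzWith 1 Real.cos := by
  apply lipschitzWith_of_nnnorm_deriv_le Real.differentiable_cos
  intro x
  rw [Real.deriv_cos]
  rw [← NNReal.coe_le_coe, coe_nnnorm, NNReal.coe_one, Real.norm_eq_abs, abs_neg]
  exact abs_le.mpr ⟨Real.neg_one_le_sin x, Real.sin_le_one x⟩

instance : IsProbabilityMeasure torusMeasure := by
  constructor
  have h : (Set.univ : Set InfTorus)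
      = ((⊤ : TopologicalSpace.PositiveCompacts InfTorus) : Set InfTorus) :=
    (TopologicalSpace.PositiveCompacts.coe_top).symm
  rw [h, torusMeasure]
  exact Measure.addHaarMeasure_self

instance : Measure.IsAddLeftInvariant torusMeasure := by
  unfold torusMeasure; infer_instance

lemma circlePos (C : Set ℝ) (hC : MeasurableSet C)
    (hpos : ∀ u v : ℝ, u < v → 0 < volume (C ∩ Set.Ioo u v))
    (α β : ℝ) (hβ : 0 < β) :
    0 < volume {t : AddCircle (1:ℝ) | α + β * cosC t ∈ C} := by
  set S : Set (AddCircle (1:ℝ)) := {t | α + β * cosC t ∈ C} with hSdef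
  have hScont : Continuous fun t : AddCircle (1:ℝ) => α + β * cosC t :=
    continuous_const.add (continuous_const.mul continuous_cosC)
  have hS : MeasurableSet S := hScont.measurable hC
  have hmp := AddCircle.measurePreserving_mk (T := 1) 0
  have hpre : volume ((((↑) : ℝ → AddCircle (1:ℝ)) ⁻¹' S) ∩ Set.Ioc 0 (0+1)) = volume S := by
    rw [← Measure.restrict_apply (hmp.measurable hS)]
    exact hmp.measure_preimage hS.nullMeasurableSet
  set φ : ℝ → ℝ := fun u => α + β * Real.cos (2 * Real.pi * u) with hφdef
  set E : Set ℝ := Set.Ioo (0:ℝ) (1/2) ∩ {u : ℝ | φ u ∈ C} with hEdef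
  have hK : (0:ℝ) ≤ 2 * Real.pi * β := by positivity
  set K : ℝ≥0 := ⟨2 * Real.pi * β, hK⟩ with hKdef
  have hlip : LipschitzWith K φ := by
    apply LipschitzWith.of_dist_le_mul
    intro u v
    have h1 := lipschitz_cos.dist_le_mul (2 * Real.pi * u) (2 * Real.pi * v)
    simp only [NNReal.coe_one, one_mul, Real.dist_eq] at h1
    simp only [NNReal.coe_mk, Real.dist_eq, hφdef]
    have h2 : α + β * Real.cos (2 * Real.pi * u) - (α + β * Real.cos (2 * Real.pi * v))
        = β * (Real.cos (2 * Real.pi * u) - Real.cos (2 * Real.pi * v)) := by ring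
    rw [h2, abs_mul, abs_of_pos hβ]
    calc β * |Real.cos (2 * Real.pi * u) - Real.cos (2 * Real.pi * v)|
        ≤ β * |2 * Real.pi * u - 2 * Real.pi * v| := by gcongr
      _ = 2 * Real.pi * β * |u - v| := by
          rw [show 2 * Real.pi * u - 2 * Real.pi * v = (2 * Real.pi) * (u - v) by ring,
            abs_mul, abs_of_pos (by positivity : (0:ℝ) < 2 * Real.pi)]
          ring
  have himg : C ∩ Set.Ioo (α - β) (α + β) ⊆ φ '' E := by
    rintro y ⟨hyC, hy1, hy2⟩
    set v : ℝ := (y - α) / β with hvdef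
    have hv1 : -1 < v := by
      rw [hvdef, lt_div_iff₀ hβ]; linarith
    have hv2 : v < 1 := by
      rw [hvdef, div_lt_one hβ]; linarith
    set u : ℝ := Real.arccos v / (2 * Real.pi) with hudef
    have hπ : (0:ℝ) < 2 * Real.pi := by positivity
    have hu1 : 0 < u := div_pos (Real.arccos_pos.mpr hv2) hπ
    have harc : Real.arccos v < Real.pi := by
      refine lt_of_le_of_ne (Real.arccos_le_pi v) fun h => ?_
      have hc := Real.cos_arccos hv1.le hv2.le
      rw [h, Real.cos_pi] at hc
      linarith
    have hu2 : u < 1/2 := by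
      rw [hudef, div_lt_iff₀ hπ]
      linarith
    have hφu : φ u = y := by
      show α + β * Real.cos (2 * Real.pi * u) = y
      have : 2 * Real.pi * u = Real.arccos v := by
        rw [hudef]; field_simp
      rw [this, Real.cos_arccos hv1.le hv2.le, hvdef]
      field_simp
      ring
    exact ⟨u, ⟨⟨hu1, hu2⟩, by rw [Set.mem_setOf_eq, hφu]; exact hyC⟩, hφu⟩
  have hEpos : 0 < volume E := by
    rcases eq_or_lt_of_le (zero_le : 0 ≤ volume E) with h0 | h
    · exfalso
      have h1 : volume (C ∩ Set.Ioo (α - β) (α + β)) ≤ volume (φ '' E) := measure_mono himg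
      have h2 : volume (φ '' E) ≤ (K : ℝ≥0∞) * volume E := by
        have h3 := hlip.hausdorffMeasure_image_le (le_of_lt one_pos) E
        rw [MeasureTheory.hausdorffMeasure_real, ENNReal.rpow_one] at h3
        exact h3
      rw [← h0, mul_zero] at h2
      exact absurd (le_antisymm (h1.trans h2) zero_le)
        (hpos _ _ (by linarith)).ne'
    · exact h
  calc (0:ℝ≥0∞) < volume E := hEpos
    _ ≤ volume ((((↑) : ℝ → AddCircle (1:ℝ)) ⁻¹' S) ∩ Set.Ioc 0 (0+1)) := by
        apply measure_mono
        rintro u ⟨⟨hu1, hu2⟩, huC⟩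
        refine ⟨?_, hu1, by norm_num; linarith⟩
        rw [Set.mem_preimage, hSdef, Set.mem_setOf_eq, cosC_coe]
        exact huC
    _ = volume S := hpre

lemma key_identity (A₀ : Set ℕ) (b : InfTorus) (i₀ : ℕ) (hi₀ : i₀ ∈ A₀)
    (t : AddCircle (1:ℝ)) (x : InfTorus) :
    torusSum (subtorusProj A₀ b (Pi.single i₀ t + x)) =
      torusSum (subtorusProj A₀ b x) - cosC (x i₀) / ((i₀:ℝ)+1)^2
        + cosC (t + x i₀) / ((i₀:ℝ)+1)^2 := by
  have h1 := Summable.tsum_eq_add_tsum_ite (torusSum_summable (subtorusProj A₀ b (Pi.single i₀ t + x))) i₀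
  have h2 := Summable.tsum_eq_add_tsum_ite (torusSum_summable (subtorusProj A₀ b x)) i₀
  have htail : ∀ i : ℕ,
      (if i = i₀ then 0 else cosC ((subtorusProj A₀ b (Pi.single i₀ t + x)) i) / ((i:ℝ)+1)^2)
      = (if i = i₀ then 0 else cosC ((subtorusProj A₀ b x) i) / ((i:ℝ)+1)^2) := by
    intro i
    by_cases h : i = i₀
    · simp [h]
    · have hxi : (Pi.single i₀ t + x : InfTorus) i = x i := by
        simp [Pi.single_eq_of_ne h]
      simp only [h, if_false, subtorusProj, hxi]
  have hhead1 : (subtorusProj A₀ b (Pi.single i₀ t + x)) i₀ = t + x i₀ := by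
    simp [subtorusProj, hi₀, Pi.single_eq_same]
  have hhead2 : (subtorusProj A₀ b x) i₀ = x i₀ := by simp [subtorusProj, hi₀]
  rw [torusSum, h1, hhead1]
  rw [torusSum, h2, hhead2] -- careful: rewrites goal RHS
  rw [tsum_congr htail]
  ring

lemma corePos (C : Set ℝ) (hC : MeasurableSet C)
    (hpos : ∀ u v : ℝ, u < v → 0 < volume (C ∩ Set.Ioo u v))
    (A₀ : Set ℕ) (b : InfTorus) (hA : A₀.Infinite) :
    0 < torusMeasure {x : InfTorus | torusSum (subtorusProj A₀ b x) ∈ C} := by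
  obtain ⟨i₀, hi₀⟩ := hA.nonempty
  have hβ : (0:ℝ) < 1 / ((i₀:ℝ)+1)^2 := by positivity
  set H : InfTorus → ℝ := fun x => torusSum (subtorusProj A₀ b x) with hHdef
  have contproj : Continuous (subtorusProj A₀ b) := by
    apply continuous_pi; intro i
    by_cases h : i ∈ A₀
    · simpa [subtorusProj, h] using continuous_apply i
    · simpa [subtorusProj, h] using continuous_const
  have contH : Continuous H := continuous_torusSum.comp contproj
  set S := {x : InfTorus | H x ∈ C} with hSdef
  have hS : MeasurableSet S := contH.measurable hC
  have contsingle : Continuous (fun t : AddCircle (1:ℝ) => (Pi.single i₀ t : InfTorus)) := by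
    apply continuous_pi; intro i
    by_cases h : i = i₀
    · subst h; simpa only [Pi.single_eq_same] using continuous_id'
    · simpa only [Pi.single_eq_of_ne h] using continuous_const
  set f : AddCircle (1:ℝ) → InfTorus → ℝ≥0∞ :=
    fun t x => C.indicator (fun _ => 1) (H (Pi.single i₀ t + x)) with hfdef
  have hfmeas : Measurable (Function.uncurry f) := by
    have hcont : Continuous (fun p : AddCircle (1:ℝ) × InfTorus => H (Pi.single i₀ p.1 + p.2)) :=
      contH.comp ((contsingle.comp continuous_fst).add continuous_snd)
    exact (measurable_const.indicator hC).comp hcont.measurable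
  have hstep : ∀ t, ∫⁻ x, f t x ∂torusMeasure = torusMeasure S := by
    intro t
    have heq : ∀ x, f t x
        = Set.indicator ((fun x => Pi.single i₀ t + x) ⁻¹' S) (fun _ => (1:ℝ≥0∞)) x := by
      intro x
      simp [hfdef, Set.indicator_apply, hSdef, Set.mem_preimage, Set.mem_setOf_eq]
    have hpre : MeasurableSet ((fun x : InfTorus => Pi.single i₀ t + x) ⁻¹' S) :=
      ((continuous_const.add continuous_id).measurable) hS
    simp_rw [heq]
    rw [lintegral_indicator hpre, setLIntegral_one]
    exact measure_preimage_add torusMeasure _ S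
  have hμS : torusMeasure S
      = ∫⁻ x, (∫⁻ t, f t x ∂(volume : Measure (AddCircle (1:ℝ)))) ∂torusMeasure := by
    have h1 : ∫⁻ t, (∫⁻ x, f t x ∂torusMeasure) ∂(volume : Measure (AddCircle (1:ℝ)))
        = torusMeasure S := by
      simp_rw [hstep]
      rw [lintegral_const]
      simp [AddCircle.measure_univ]
    rw [← h1, lintegral_lintegral_swap hfmeas.aemeasurable]
  have hginner : ∀ x, 0 < ∫⁻ t, f t x ∂(volume : Measure (AddCircle (1:ℝ))) := by
    intro x
    set α : ℝ := H x - cosC (x i₀) / ((i₀:ℝ)+1)^2 with hαdef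
    set F : AddCircle (1:ℝ) → ℝ≥0∞ :=
      fun s => C.indicator (fun _ => 1) (α + (1 / ((i₀:ℝ)+1)^2) * cosC s) with hFdef
    have hkey : ∀ t, f t x = F (t + x i₀) := by
      intro t
      simp only [hfdef, hFdef, hαdef, hHdef]
      congr 1
      rw [key_identity A₀ b i₀ hi₀ t x]
      ring
    have hmeasT : MeasurableSet {t : AddCircle (1:ℝ) | α + (1 / ((i₀:ℝ)+1)^2) * cosC t ∈ C} :=
      (continuous_const.add (continuous_const.mul continuous_cosC)).measurable hC
    have hFind : ∀ s, F s
        = Set.indicator {t : AddCircle (1:ℝ) | α + (1 / ((i₀:ℝ)+1)^2) * cosC t ∈ C}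
            (1 : AddCircle (1:ℝ) → ℝ≥0∞) s := by
      intro s
      simp [hFdef, Set.indicator_apply, Set.mem_setOf_eq]
    calc (0:ℝ≥0∞)
        < volume {t : AddCircle (1:ℝ) | α + (1 / ((i₀:ℝ)+1)^2) * cosC t ∈ C} :=
          circlePos C hC hpos α _ hβ
      _ = ∫⁻ t, F t ∂(volume : Measure (AddCircle (1:ℝ))) := by
          simp_rw [hFind]
          rw [lintegral_indicator hmeasT]
          simp
      _ = ∫⁻ t, F (t + x i₀) ∂(volume : Measure (AddCircle (1:ℝ))) :=
          (lintegral_add_right_eq_self F (x i₀)).symm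
      _ = ∫⁻ t, f t x ∂(volume : Measure (AddCircle (1:ℝ))) := by
          simp_rw [hkey]
  show 0 < torusMeasure S
  rw [hμS]
  rcases eq_or_lt_of_le (zero_le : 0 ≤ (∫⁻ x, (∫⁻ t, f t x ∂(volume : Measure (AddCircle (1:ℝ))))
      ∂torusMeasure)) with h0 | h
  · exfalso
    have hgmeas : Measurable fun x => ∫⁻ t, f t x ∂(volume : Measure (AddCircle (1:ℝ))) :=
      Measurable.lintegral_prod_left hfmeas
    rw [eq_comm, lintegral_eq_zero_iff hgmeas] at h0
    have hne : (torusMeasure : Measure InfTorus) ≠ 0 := IsProbabilityMeasure.ne_zero _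
    haveI : (ae torusMeasure).NeBot := ae_neBot.mpr hne
    obtain ⟨x, hx⟩ := h0.exists
    exact absurd hx (hginner x).ne'
  · exact h


/-- Let `B ⊆ ℝ` be a Borel set such that both `B` and its complement meet
every nonempty open interval in positive Lebesgue measure. Then the indicator
`f = 1_{{x : ∑ᵢ cos(2πxᵢ)/i² ∈ B}}` is measurable but has empty spectrum: for every `a ∈ ℝ`
there is `ε > 0` such that no parallel infinite-dimensional subtorus `M` satisfies
`ess sup_M |f - a| < ε`. -/
theorem indicator_has_empty_spectrum (B : Set ℝ) (hB : MeasurableSet B)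
    (hB1 : ∀ u v : ℝ, u < v → 0 < volume (B ∩ Set.Ioo u v))
    (hB2 : ∀ u v : ℝ, u < v → 0 < volume (Bᶜ ∩ Set.Ioo u v)) :
    AEMeasurable (specFun B) torusMeasure ∧
    ∀ a : ℝ, ∃ ε : ℝ, 0 < ε ∧
      ∀ (A₀ : Set ℕ) (b : InfTorus), A₀.Infinite →
        ¬ essSup (fun x => ENNReal.ofReal |specFun B x - a|) (subtorusMeasure A₀ b)
            < ENNReal.ofReal ε := by
  have hS₁ : MeasurableSet {x : InfTorus | torusSum x ∈ B} := continuous_torusSum.measurable hB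
  have hmeas : Measurable (specFun B) := by
    rw [specFun_eq]
    exact measurable_const.indicator hS₁
  refine ⟨hmeas.aemeasurable, fun a => ⟨1/2, by norm_num, fun A₀ b hA hlt => ?_⟩⟩
  set ν := subtorusMeasure A₀ b with hνdef
  set hfun : InfTorus → ℝ≥0∞ := fun x => ENNReal.ofReal |specFun B x - a| with hfundef
  have hproj : Measurable (subtorusProj A₀ b) := by
    apply measurable_pi_lambda
    intro i
    by_cases h : i ∈ A₀
    · simpa [subtorusProj, h] using measurable_pi_apply i
    · simp only [subtorusProj, h, if_false]
      exact measurable_const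
  have hpos1 : 0 < ν {x : InfTorus | torusSum x ∈ B} := by
    rw [hνdef, subtorusMeasure, Measure.map_apply hproj hS₁]
    exact corePos B hB hB1 A₀ b hA
  have hpos0 : 0 < ν ({x : InfTorus | torusSum x ∈ B}ᶜ) := by
    rw [hνdef, subtorusMeasure, Measure.map_apply hproj hS₁.compl]
    exact corePos Bᶜ hB.compl hB2 A₀ b hA
  have main : ∀ (s : Set InfTorus) (c : ℝ≥0∞), 0 < ν s → (∀ x ∈ s, hfun x = c) →
      c ≤ essSup hfun ν := by
    intro s c hs hc
    by_contra hltc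
    push_neg at hltc
    have hae := ENNReal.ae_le_essSup (μ := ν) (f := hfun)
    rw [MeasureTheory.ae_iff] at hae
    have hsub : s ⊆ {y | ¬ hfun y ≤ essSup hfun ν} := by
      intro x hx
      simp only [Set.mem_setOf_eq, not_le]
      rw [hc x hx]
      exact hltc
    exact hs.ne' (measure_mono_null hsub hae)
  have h1 : ENNReal.ofReal |1 - a| ≤ essSup hfun ν := by
    refine main _ _ hpos1 fun x hx => ?_
    rw [hfundef]
    simp only
    rw [specFun_eq, Set.indicator_of_mem hx]
  have h0 : ENNReal.ofReal |0 - a| ≤ essSup hfun ν := by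
    refine main _ _ hpos0 fun x hx => ?_
    rw [hfundef]
    simp only
    rw [specFun_eq, Set.indicator_of_notMem hx]
  have e1 : |1 - a| < 1/2 :=
    (ENNReal.ofReal_lt_ofReal_iff (by norm_num)).mp (lt_of_le_of_lt h1 hlt)
  have e0 : |0 - a| < 1/2 :=
    (ENNReal.ofReal_lt_ofReal_iff (by norm_num)).mp (lt_of_le_of_lt h0 hlt)
  have habs : (1:ℝ) ≤ |1 - a| + |0 - a| := by
    have h := abs_add_le (1 - a) (a - 0)
    have h2 : (1 - a) + (a - 0) = 1 := by ring
    rw [h2, abs_one] at h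
    have h3 : |a - 0| = |0 - a| := abs_sub_comm _ _
    linarith
  linarith
end
end

section
/- For every x ∈ 𝕋^∞, the set {y ∈ 𝕋^∞ : dist₂(x, y) < ∞} — the dist₂-connectivity class of x in 𝕋^∞ — has σ-measure zero. Consequently 𝕋^∞ splits into infinitely many such classes, each of measure zero. -/
noncomputable section
open MeasureTheory ENNReal Filter
open scoped Classical

instance : Measure.IsAddHaarMeasure torusMeasure := by
  unfold torusMeasure; infer_instance

instance inst_s14 : IsProbabilityMeasure torusMeasure := by
  constructor
  rw [torusMeasure, ← TopologicalSpace.PositiveCompacts.coe_top (α := InfTorus)]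
  exact Measure.addHaarMeasure_self

instance : IsProbabilityMeasure (volume : Measure (AddCircle (1 : ℝ))) :=
  ⟨by rw [AddCircle.measure_univ]; simp⟩

/-- the tail cylinder sets are null -/
lemma tail_null (x : InfTorus) (N : ℕ) :
    torusMeasure {y : InfTorus | ∀ i, N ≤ i → dist (x i) (y i) ≤ 1/4} = 0 := by
  set T := {y : InfTorus | ∀ i, N ≤ i → dist (x i) (y i) ≤ 1/4} with hT
  have key : ∀ k : ℕ, torusMeasure T ≤ (ENNReal.ofReal (1/2)) ^ k := by
    intro k
    set f : InfTorus →+ (Fin k → AddCircle (1 : ℝ)) :=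
      { toFun := fun y j => y (N + j)
        map_zero' := rfl
        map_add' := fun _ _ => rfl } with hf
    have hcont : Continuous f := continuous_pi fun j => continuous_apply _
    have hsurj : Function.Surjective f := by
      intro g
      refine ⟨fun i => if h : N ≤ i ∧ i - N < k then g ⟨i - N, h.2⟩ else 0, ?_⟩
      funext j
      have h1 : N ≤ N + (j : ℕ) ∧ N + (j : ℕ) - N < k := ⟨Nat.le_add_right _ _, by omega⟩
      simp only [hf, AddMonoidHom.coe_mk, ZeroHom.coe_mk, dif_pos h1]
      congr 1
      apply Fin.ext
      simp
    have hmp : MeasurePreserving f torusMeasure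
        (volume : Measure (Fin k → AddCircle (1 : ℝ))) :=
      AddMonoidHom.measurePreserving hcont hsurj (by simp)
    set S : Set (Fin k → AddCircle (1 : ℝ)) :=
      Set.univ.pi fun j : Fin k => Metric.closedBall (x (N + j)) (1/4) with hS
    have hSm : MeasurableSet S :=
      MeasurableSet.univ_pi fun j => Metric.isClosed_closedBall.measurableSet
    have hsub : T ⊆ f ⁻¹' S := by
      intro y hy
      intro j _
      rw [Metric.mem_closedBall, dist_comm]
      exact hy (N + j) (Nat.le_add_right _ _)
    have hvol : volume S = (ENNReal.ofReal (1/2)) ^ k := by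
      rw [hS, volume_pi_pi]
      have : ∀ j : Fin k, volume (Metric.closedBall (x (N + j)) (1/4))
          = ENNReal.ofReal (1/2) := by
        intro j
        rw [AddCircle.volume_closedBall]
        norm_num
      simp only [this, Finset.prod_const, Finset.card_univ, Fintype.card_fin]
    calc torusMeasure T ≤ torusMeasure (f ⁻¹' S) := measure_mono hsub
      _ = volume S := hmp.measure_preimage hSm.nullMeasurableSet
      _ = _ := hvol
  have htend : Tendsto (fun k : ℕ => (ENNReal.ofReal (1/2)) ^ k) atTop (nhds 0) :=
    ENNReal.tendsto_pow_atTop_nhds_zero_of_lt_one (by rw [ENNReal.ofReal_lt_one]; norm_num)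
  exact le_antisymm (ge_of_tendsto' htend key) zero_le

lemma class_null (x : InfTorus) :
    torusMeasure {y : InfTorus | distP 2 x y ≠ ∞} = 0 := by
  have hsub : {y : InfTorus | distP 2 x y ≠ ∞} ⊆
      ⋃ N : ℕ, {y : InfTorus | ∀ i, N ≤ i → dist (x i) (y i) ≤ 1/4} := by
    intro y hy
    have htsum : (∑' i, edist (x i) (y i) ^ (2 : ℝ)) ≠ ∞ := by
      intro h
      apply hy
      rw [distP, h, ENNReal.top_rpow_of_pos (by norm_num)]
    have hfin : {i : ℕ | (1/16 : ℝ≥0∞) ≤ edist (x i) (y i) ^ (2 : ℝ)}.Finite :=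
      ENNReal.finite_const_le_of_tsum_ne_top htsum (by norm_num)
    obtain ⟨M, hM⟩ := hfin.bddAbove
    refine Set.mem_iUnion.2 ⟨M + 1, fun i hi => ?_⟩
    have hlt : edist (x i) (y i) ^ (2 : ℝ) < 1/16 := by
      by_contra hge
      exact absurd (hM (not_lt.1 hge)) (by omega)
    have hedist : edist (x i) (y i) ≤ ENNReal.ofReal (1/4) := by
      by_contra hgt
      push_neg at hgt
      have h1 : (ENNReal.ofReal (1/4)) ^ (2 : ℝ) ≤ edist (x i) (y i) ^ (2 : ℝ) :=
        ENNReal.rpow_le_rpow hgt.le (by norm_num)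
      have h2 : (ENNReal.ofReal (1/4)) ^ (2 : ℝ) = (1/16 : ℝ≥0∞) := by
        rw [show (2:ℝ) = ((2:ℕ):ℝ) by norm_num, ENNReal.rpow_natCast,
          ENNReal.ofReal_div_of_pos (by norm_num), ENNReal.ofReal_one,
          ENNReal.ofReal_ofNat, one_div, ← ENNReal.inv_pow]
        rw [show (4:ℝ≥0∞)^2 = 16 by norm_num, one_div]
      rw [h2] at h1
      exact absurd (lt_of_lt_of_le hlt h1) (lt_irrefl _)
    exact (edist_le_ofReal (by norm_num)).1 hedist
  exact measure_mono_null hsub (measure_iUnion_null fun N => tail_null x N)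

/-- Every `dist₂`-connectivity class `{y : dist₂(x,y) < ∞}` of `𝕋^∞` has
measure zero; consequently there are infinitely many such classes. -/
theorem connectivity_classes_null_and_infinite :
    (∀ x : InfTorus, torusMeasure {y : InfTorus | distP 2 x y ≠ ∞} = 0) ∧
      {C : Set InfTorus | ∃ x : InfTorus, C = {y : InfTorus | distP 2 x y ≠ ∞}}.Infinite := by
  refine ⟨class_null, ?_⟩
  intro hfin
  have hself : ∀ y : InfTorus, distP 2 y y ≠ ∞ := by
    intro y
    rw [distP]
    simp [ENNReal.zero_rpow_of_pos, ENNReal.rpow_eq_top_iff]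
  have hcover : (Set.univ : Set InfTorus) ⊆
      ⋃₀ {C : Set InfTorus | ∃ x : InfTorus, C = {y : InfTorus | distP 2 x y ≠ ∞}} := by
    intro y _
    exact ⟨{z | distP 2 y z ≠ ∞}, ⟨y, rfl⟩, hself y⟩
  have hnull : torusMeasure (⋃₀ {C : Set InfTorus |
      ∃ x : InfTorus, C = {y : InfTorus | distP 2 x y ≠ ∞}}) = 0 := by
    rw [measure_sUnion_null_iff hfin.countable]
    rintro t ⟨x, rfl⟩
    exact class_null x
  have : torusMeasure (Set.univ : Set InfTorus) = 0 :=
    measure_mono_null hcover hnull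
  rw [measure_univ] at this
  exact one_ne_zero this
end
end
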